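/- Let U, V be real Hilbert spaces, b : U × V → ℝ a bounded bilinear form satisfying injectivity and the inf-sup condition, L ∈ V', and let u ∈ U solve b(u,v) = L(v) for all v ∈ V. Let U_h ⊆ U be a finite-dimensional subspace and Θ : U → V the trial-to-test operator defined by ⟨Θw, v⟩_V = b(w,v) for all v. Then there exists a unique u_h ∈ U_h with b(u_h, Θw) = L(Θw) for all w ∈ U_h, and the error is the best approximation in the energy norm: ‖u − u_h‖_E = inf_{w ∈ U_h} ‖u − w‖_E, where ‖z‖_E := sup_{v≠0} b(z,v)/‖v‖_V. -/

import Mathlib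

open scoped RealInnerProductSpace

lemma sup_inner_div_norm {V : Type*} [NormedAddCommGroup V] [InnerProductSpace ℝ V]
    (x : V) : (⨆ v : {v : V // v ≠ 0}, ⟪x, v.1⟫ / ‖v.1‖) = ‖x‖ := by
  have hbdd : BddAbove (Set.range fun v : {v : V // v ≠ 0} => ⟪x, v.1⟫ / ‖v.1‖) := by
    refine ⟨‖x‖, ?_⟩
    rintro _ ⟨v, rfl⟩
    have hv : 0 < ‖v.1‖ := norm_pos_iff.mpr v.2
    rw [div_le_iff₀ hv]
    exact real_inner_le_norm x v.1
  by_cases h : Nonempty {v : V // v ≠ 0}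
  · apply le_antisymm
    · apply ciSup_le
      intro v
      have hv : 0 < ‖v.1‖ := norm_pos_iff.mpr v.2
      rw [div_le_iff₀ hv]
      exact real_inner_le_norm x v.1
    · by_cases hx : x = 0
      · subst hx
        simp only [inner_zero_left, zero_div, norm_zero]
        exact le_of_eq (ciSup_const).symm
      · have := le_ciSup hbdd (⟨x, hx⟩ : {v : V // v ≠ 0})
        simp only [real_inner_self_eq_norm_sq] at this
        have hx' : 0 < ‖x‖ := norm_pos_iff.mpr hx
        calc ‖x‖ = ‖x‖ ^ 2 / ‖x‖ := by field_simp
        _ ≤ _ := this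
  · rw [not_nonempty_iff] at h
    rw [Real.iSup_of_isEmpty]
    have : x = 0 := by
      by_contra hx
      exact h.false ⟨x, hx⟩
    simp [this]

/-- the ideal DPG method delivers the unique discrete solution and the
best approximation in the energy norm `‖z‖_E = sup_{v≠0} b(z,v)/‖v‖_V`. -/
theorem dpg_best_approximation
    {U V : Type*} [NormedAddCommGroup U] [InnerProductSpace ℝ U] [CompleteSpace U]
    [NormedAddCommGroup V] [InnerProductSpace ℝ V] [CompleteSpace V]
    (b : U →L[ℝ] V →L[ℝ] ℝ) (Cinf : ℝ) (hCinf : 0 < Cinf)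
    (hinj : ∀ u : U, (∀ v : V, b u v = 0) → u = 0)
    (hinfsup : ∀ v : V, Cinf * ‖v‖ ≤ ⨆ u : {u : U // u ≠ 0}, b u.1 v / ‖u.1‖)
    (L : V →L[ℝ] ℝ) (u : U) (hu : ∀ v : V, b u v = L v)
    (Uh : Submodule ℝ U) [FiniteDimensional ℝ Uh]
    (Θ : U →L[ℝ] V) (hΘ : ∀ (w : U) (v : V), ⟪Θ w, v⟫ = b w v) :
    ∃ uh : Uh,
      (∀ w : Uh, b (uh : U) (Θ (w : U)) = L (Θ (w : U))) ∧
      (∀ uh' : Uh, (∀ w : Uh, b (uh' : U) (Θ (w : U)) = L (Θ (w : U))) → uh' = uh) ∧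
      (⨆ v : {v : V // v ≠ 0}, b (u - (uh : U)) v.1 / ‖v.1‖) =
        ⨅ w : Uh, ⨆ v : {v : V // v ≠ 0}, b (u - (w : U)) v.1 / ‖v.1‖ := by
  -- energy norm equals ‖Θ z‖
  have hE : ∀ z : U, (⨆ v : {v : V // v ≠ 0}, b z v / ‖v.1‖) = ‖Θ z‖ := by
    intro z
    rw [← sup_inner_div_norm (Θ z)]
    exact iSup_congr fun v => by rw [hΘ]
  -- Θ is injective
  have hΘinj : ∀ z : U, Θ z = 0 → z = 0 := by
    intro z hz
    exact hinj z fun v => by rw [← hΘ, hz, inner_zero_left]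
  -- the image space
  set K : Submodule ℝ V := Uh.map (Θ : U →ₗ[ℝ] V) with hK
  haveI : FiniteDimensional ℝ K := Module.Finite.map Uh (Θ : U →ₗ[ℝ] V)
  -- orthogonal projection of Θ u
  set p : V := (K.orthogonalProjectionOnto (Θ u) : V) with hp
  obtain ⟨w0, hw0, hw0eq⟩ : ∃ w0 ∈ Uh, Θ w0 = p := (K.orthogonalProjectionOnto (Θ u)).2
  refine ⟨⟨w0, hw0⟩, ?_, ?_, ?_⟩
  · -- solves the discrete equations
    intro w
    have horth : Θ u - p ∈ Kᗮ := Submodule.sub_starProjection_mem_orthogonal (K := K) (Θ u)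
    have hmem : Θ (w : U) ∈ K := ⟨w, w.2, rfl⟩
    have h0 := (Submodule.mem_orthogonal K _).mp horth _ hmem
    rw [real_inner_comm, inner_sub_left, sub_eq_zero, ← hw0eq] at h0
    rw [← hΘ, ← h0, hΘ, hu]
  · -- uniqueness
    intro uh' h'
    have key : ∀ w : Uh, ⟪Θ ((uh' : U) - w0), Θ (w : U)⟫ = 0 := by
      intro w
      have h1 : b (uh' : U) (Θ (w : U)) = L (Θ (w : U)) := h' w
      have h2 : b w0 (Θ (w : U)) = L (Θ (w : U)) := by
        have horth : Θ u - p ∈ Kᗮ := Submodule.sub_starProjection_mem_orthogonal (K := K) (Θ u)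
        have hmem : Θ (w : U) ∈ K := ⟨w, w.2, rfl⟩
        have h0 := (Submodule.mem_orthogonal K _).mp horth _ hmem
        rw [real_inner_comm, inner_sub_left, sub_eq_zero, ← hw0eq] at h0
        rw [← hΘ, ← h0, hΘ, hu]
      rw [map_sub, inner_sub_left, sub_eq_zero, hΘ, hΘ, h1, h2]
    have hz : Θ ((uh' : U) - w0) = 0 := by
      have hd : (uh' : U) - w0 ∈ Uh := Uh.sub_mem uh'.2 hw0
      have := key ⟨(uh' : U) - w0, hd⟩
      simpa [real_inner_self_eq_norm_sq, pow_eq_zero_iff, norm_eq_zero] using this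
    exact Subtype.ext (sub_eq_zero.mp (hΘinj _ hz))
  · -- best approximation
    simp only [hE]
    have hmin : ‖Θ u - p‖ = ⨅ x : K, ‖Θ u - x‖ := Submodule.starProjection_minimal (U := K) (Θ u)
    have hbelow : BddBelow (Set.range fun w : Uh => ‖Θ (u - (w : U))‖) :=
      ⟨0, by rintro _ ⟨w, rfl⟩; positivity⟩
    have hbelowK : BddBelow (Set.range fun x : K => ‖Θ u - (x : V)‖) :=
      ⟨0, by rintro _ ⟨x, rfl⟩; positivity⟩
    apply le_antisymm
    · apply le_ciInf
      intro w
      have h1 : ‖Θ (u - w0)‖ = ‖Θ u - p‖ := by rw [map_sub, hw0eq]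
      rw [h1, hmin]
      refine ciInf_le_of_le hbelowK ⟨Θ (w : U), ⟨w, w.2, rfl⟩⟩ ?_
      rw [map_sub]
    · exact ciInf_le hbelow ⟨w0, hw0⟩
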